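/- Let w and w' be nonnegative integer weight vectors with w' a refinement of w, both of total sum |λ|−|μ|. If the Gelfand–Tsetlin polytope P_{λ/μ,w} is nonempty, then P_{λ/μ,w'} is nonempty. (Equivalently: if P_{λ/μ,w'} is empty then P_{λ/μ,w} is empty.) -/

import Mathlib

open Finset

/-- A real `(m+1) × n` array satisfying the Gelfand–Tsetlin inequalities:
rows increase upwards along columns, and down-right diagonals decrease.
Row `0` is the bottom row, row `m` the top row. -/
def IsGTPattern (m n : ℕ) (x : Fin (m + 1) → Fin n → ℝ) : Prop :=
  (∀ (i : Fin m) (j : Fin n), x i.castSucc j ≤ x i.succ j) ∧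
  (∀ (i : Fin m) (j : Fin n) (h : (j : ℕ) + 1 < n),
    x i.succ ⟨(j : ℕ) + 1, h⟩ ≤ x i.castSucc j)

/-- The Gelfand–Tsetlin polytope `P_{λ/μ,w}`: row `0` is `μ`, row `m` is `λ`,
and the weight vector `w` has `m` entries, prescribing the successive
differences of row sums. -/
def gtPolytope (m n : ℕ) (lam mu : Fin n → ℤ) (w : Fin m → ℤ) :
    Set (Fin (m + 1) → Fin n → ℝ) :=
  {x | IsGTPattern m n x ∧ (∀ j, x 0 j = (mu j : ℝ)) ∧
    (∀ j, x (Fin.last m) j = (lam j : ℝ)) ∧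
    ∀ i : Fin m, (∑ j, x i.succ j) - (∑ j, x i.castSucc j) = (w i : ℝ)}

/-- `w'` is a (composition) refinement of `w`: there is a monotone surjection
from fine indices onto coarse indices such that each entry of `w` is the sum of
the entries of `w'` in the corresponding block (blocks are consecutive and
nonempty). -/
def Refines {m m' : ℕ} (w : Fin m → ℤ) (w' : Fin m' → ℤ) : Prop :=
  ∃ g : Fin m' → Fin m, Monotone g ∧ Function.Surjective g ∧
    ∀ s : Fin m, w s = ∑ t ∈ Finset.univ.filter (fun t => g t = s), w' t

noncomputable def interp (n : ℕ) (a b : ℕ → ℝ) (c : ℝ) (j : ℕ) : ℝ :=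
  max (a j) (min (b j) (c - (∑ k ∈ Finset.range j, b k) - (∑ k ∈ Finset.Ico (j+1) n, a k)))

lemma interp_ge (n : ℕ) (a b : ℕ → ℝ) (c : ℝ) (j : ℕ) : a j ≤ interp n a b c j :=
  le_max_left _ _

lemma interp_le {n : ℕ} {a b : ℕ → ℝ} (hab : ∀ k, a k ≤ b k) (c : ℝ) (j : ℕ) :
    interp n a b c j ≤ b j :=
  max_le (hab j) (min_le_left _ _)

lemma interp_mono (n : ℕ) (a b : ℕ → ℝ) {c c' : ℝ} (h : c ≤ c') (j : ℕ) :
    interp n a b c j ≤ interp n a b c' j :=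
  max_le_max le_rfl (min_le_min le_rfl (by linarith))

private lemma clamp_step {L B A aj bj c : ℝ} (hab : aj ≤ bj)
    (ih : L + (aj + A) = min c (B + (aj + A))) :
    (L + max aj (min bj (c - B - A))) + A = min c ((B + bj) + A) := by
  rcases le_total c (B + (aj + A)) with h1 | h1
  · rw [min_eq_left h1] at ih
    rw [min_eq_right (show c - B - A ≤ bj by linarith),
      max_eq_left (show c - B - A ≤ aj by linarith),
      min_eq_left (show c ≤ (B + bj) + A by linarith)]
    linarith
  · rw [min_eq_right h1] at ih
    rcases le_total c (B + bj + A) with h2 | h2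
    · rw [min_eq_right (show c - B - A ≤ bj by linarith),
        max_eq_right (show aj ≤ c - B - A by linarith),
        min_eq_left (show c ≤ (B + bj) + A by linarith)]
      linarith
    · rw [min_eq_left (show bj ≤ c - B - A by linarith), max_eq_right hab,
        min_eq_right (show (B + bj) + A ≤ c by linarith)]
      linarith

lemma interp_partial {n : ℕ} {a b : ℕ → ℝ} {c : ℝ}
    (hab : ∀ k, a k ≤ b k) (hc1 : ∑ k ∈ Finset.range n, a k ≤ c) :
    ∀ j, j ≤ n → (∑ k ∈ Finset.range j, interp n a b c k) + (∑ k ∈ Finset.Ico j n, a k)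
      = min c ((∑ k ∈ Finset.range j, b k) + (∑ k ∈ Finset.Ico j n, a k)) := by
  intro j
  induction j with
  | zero =>
    intro _
    rw [show Finset.Ico 0 n = Finset.range n from by rw [Finset.range_eq_Ico]]
    simp only [Finset.range_zero, Finset.sum_empty, zero_add]
    exact (min_eq_right hc1).symm
  | succ j ih =>
    intro hj
    have hjn : j < n := hj
    have ihj := ih hjn.le
    have hsplit : ∑ k ∈ Finset.Ico j n, a k = a j + ∑ k ∈ Finset.Ico (j+1) n, a k :=
      Finset.sum_eq_sum_Ico_succ_bot hjn a
    rw [hsplit] at ihj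
    rw [Finset.sum_range_succ, Finset.sum_range_succ]
    exact clamp_step (hab j) ihj

lemma interp_sum {n : ℕ} {a b : ℕ → ℝ} {c : ℝ}
    (hab : ∀ k, a k ≤ b k) (hc1 : ∑ k ∈ Finset.range n, a k ≤ c)
    (hc2 : c ≤ ∑ k ∈ Finset.range n, b k) :
    ∑ k ∈ Finset.range n, interp n a b c k = c := by
  have h := interp_partial hab hc1 n le_rfl
  simp only [Finset.Ico_self, Finset.sum_empty, add_zero] at h
  rw [h, min_eq_left hc2]

lemma interp_eq_left {n : ℕ} {a b : ℕ → ℝ} {c : ℝ}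
    (hab : ∀ k, a k ≤ b k) (hc : c = ∑ k ∈ Finset.range n, a k) :
    ∀ k < n, interp n a b c k = a k := by
  have hs : ∑ k ∈ Finset.range n, interp n a b c k = ∑ k ∈ Finset.range n, a k := by
    rw [interp_sum hab hc.ge (hc.trans_le (Finset.sum_le_sum fun k _ => hab k)), hc]
  have hle : ∀ k ∈ Finset.range n, a k ≤ interp n a b c k :=
    fun k _ => interp_ge n a b c k
  intro k hk
  exact ((Finset.sum_eq_sum_iff_of_le hle).mp hs.symm k (Finset.mem_range.2 hk)).symm

private lemma filter_lt_succ {N : ℕ} (i : Fin N) :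
    Finset.univ.filter (fun t : Fin N => (t : ℕ) < (i : ℕ) + 1) =
      insert i (Finset.univ.filter (fun t : Fin N => (t : ℕ) < (i : ℕ))) := by
  ext t
  simp only [Finset.mem_filter, Finset.mem_univ, true_and, Finset.mem_insert, Fin.ext_iff]
  omega


/-- If `w'` refines `w` and `P_{λ/μ,w}` is nonempty, then `P_{λ/μ,w'}` is
nonempty. -/
theorem statement7 (n : ℕ) (hn : 1 ≤ n) (lam mu : Fin n → ℤ)
    (hlam : Antitone lam) (hmu : Antitone mu)
    (hmu0 : ∀ j, 0 ≤ mu j) (hge : ∀ j, mu j ≤ lam j)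
    (m m' : ℕ) (w : Fin m → ℤ) (w' : Fin m' → ℤ)
    (hw : ∀ i, 0 ≤ w i) (hw' : ∀ i, 0 ≤ w' i)
    (hsum : ∑ i, w i = ∑ j, lam j - ∑ j, mu j)
    (hsum' : ∑ i, w' i = ∑ j, lam j - ∑ j, mu j)
    (href : Refines w w')
    (hne : (gtPolytope m n lam mu w).Nonempty) :
    (gtPolytope m' n lam mu w').Nonempty := by
  classical
  rcases Nat.eq_zero_or_pos m' with hm' | hm'
  · -- degenerate case: m' = 0, then lam = mu
    subst hm'
    have h0 : (0 : ℤ) = ∑ j, lam j - ∑ j, mu j := by simpa using hsum'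
    have hlm : ∀ j, lam j = mu j := by
      have hz : ∑ j, (lam j - mu j) = 0 := by
        rw [Finset.sum_sub_distrib]; omega
      intro j
      have := (Finset.sum_eq_zero_iff_of_nonneg
        (fun j _ => sub_nonneg.2 (hge j))).mp hz j (Finset.mem_univ j)
      omega
    refine ⟨fun _ j => (lam j : ℝ), ⟨fun i => i.elim0, fun i => i.elim0⟩,
      fun j => ?_, fun j => rfl, fun i => i.elim0⟩
    show (lam j : ℝ) = (mu j : ℝ)
    exact_mod_cast hlm j
  · -- main case: m' > 0
    obtain ⟨x, ⟨hcol, hdiag⟩, hx0, hxl, hxw⟩ := hne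
    obtain ⟨g, hgmono, hgsurj, hgw⟩ := href
    set xr : Fin (m + 1) → ℕ → ℝ := fun i k => if h : k < n then x i ⟨k, h⟩ else 0 with hxrdef
    have hxr_lt : ∀ (i : Fin (m+1)) (k : ℕ) (hk : k < n), xr i k = x i ⟨k, hk⟩ :=
      fun i k hk => dif_pos hk
    have hab1 : ∀ (i : Fin m) (k : ℕ), xr i.castSucc k ≤ xr i.succ k := by
      intro i k
      by_cases hk : k < n
      · rw [hxr_lt _ _ hk, hxr_lt _ _ hk]; exact hcol i ⟨k, hk⟩
      · simp [hxrdef, hk]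
    have hdiag1 : ∀ (i : Fin m) (k : ℕ), ∀ hk : k + 1 < n,
        xr i.succ (k+1) ≤ xr i.castSucc k := by
      intro i k hk
      rw [hxr_lt _ _ hk, hxr_lt _ _ (by omega)]
      exact hdiag i ⟨k, by omega⟩ hk
    have hrow_sum : ∀ i : Fin (m+1), ∑ k ∈ Finset.range n, xr i k = ∑ j, x i j := by
      intro i
      rw [← Fin.sum_univ_eq_sum_range (fun k => xr i k) n]
      exact Finset.sum_congr rfl fun j _ => by rw [hxr_lt _ _ j.isLt]
    have hmonorow : ∀ (i i' : Fin (m+1)), i ≤ i' → ∀ k, xr i k ≤ xr i' k := by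
      have key : ∀ (p q : ℕ) (hpq : p ≤ q) (hq : q ≤ m) (k : ℕ),
          xr ⟨p, by omega⟩ k ≤ xr ⟨q, by omega⟩ k := by
        intro p q hpq
        induction q, hpq using Nat.le_induction with
        | base => intro _ _; exact le_rfl
        | succ q hpq ih =>
          intro hq k
          refine (ih (by omega) k).trans ?_
          have hqm : q < m := by omega
          have := hab1 ⟨q, hqm⟩ k
          rwa [Fin.castSucc_mk, Fin.succ_mk] at this
      intro i i' h k
      have h2 := key i.val i'.val h (Nat.lt_succ_iff.mp i'.isLt) k
      simpa using h2
    set C : Fin (m+1) → ℝ := fun i =>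
      (∑ j, (mu j : ℝ)) + ∑ s ∈ Finset.univ.filter (fun s : Fin m => (s:ℕ) < (i:ℕ)), (w s : ℝ)
      with hCdef
    have hrowC : ∀ i : Fin (m+1), ∑ k ∈ Finset.range n, xr i k = C i := by
      intro i
      induction i using Fin.induction with
      | zero =>
        rw [hrow_sum]
        simp only [hCdef]
        rw [show Finset.univ.filter (fun s : Fin m => (s:ℕ) < ((0 : Fin (m+1)):ℕ)) = ∅ from by
          simp]
        simp only [Finset.sum_empty, add_zero]
        exact Finset.sum_congr rfl fun j _ => hx0 j
      | succ i ih =>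
        rw [hrow_sum] at ih ⊢
        have hCsucc : C i.succ = C i.castSucc + (w i : ℝ) := by
          simp only [hCdef, Fin.val_succ, Fin.coe_castSucc]
          rw [filter_lt_succ i, Finset.sum_insert (by simp)]
          ring
        rw [hCsucc, ← ih]
        have := hxw i
        linarith
    have hCmono : ∀ i i' : Fin (m+1), i ≤ i' → C i ≤ C i' := by
      intro i i' h
      simp only [hCdef]
      refine add_le_add_right (Finset.sum_le_sum_of_subset_of_nonneg ?_ ?_) _
      · intro s hs
        simp only [Finset.mem_filter, Finset.mem_univ, true_and] at hs ⊢
        have : (i:ℕ) ≤ (i':ℕ) := h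
        omega
      · intro s _ _
        exact_mod_cast hw s
    have heqrow : ∀ i i' : Fin (m+1), i ≤ i' → C i' ≤ C i → ∀ k, xr i k = xr i' k := by
      intro i i' hle hCle k
      by_cases hk : k < n
      · have hpt : ∀ k ∈ Finset.range n, xr i k ≤ xr i' k :=
          fun k _ => hmonorow i i' hle k
        have hsumeq : ∑ k ∈ Finset.range n, xr i k = ∑ k ∈ Finset.range n, xr i' k := by
          rw [hrowC, hrowC]
          exact le_antisymm (hCmono i i' hle) hCle
        exact (Finset.sum_eq_sum_iff_of_le hpt).mp hsumeq k (Finset.mem_range.2 hk)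
      · simp [hxrdef, hk]
    set cf : Fin (m'+1) → ℝ := fun r =>
      (∑ j, (mu j : ℝ)) + ∑ t ∈ Finset.univ.filter (fun t : Fin m' => (t:ℕ) < (r:ℕ)), (w' t : ℝ)
      with hcfdef
    have hcfsucc : ∀ r : Fin m', cf r.succ = cf r.castSucc + (w' r : ℝ) := by
      intro r
      simp only [hcfdef, Fin.val_succ, Fin.coe_castSucc]
      rw [filter_lt_succ r, Finset.sum_insert (by simp)]
      ring
    have hcfmono : ∀ r r' : Fin (m'+1), r ≤ r' → cf r ≤ cf r' := by
      intro r r' h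
      simp only [hcfdef]
      refine add_le_add_right (Finset.sum_le_sum_of_subset_of_nonneg ?_ ?_) _
      · intro t ht
        simp only [Finset.mem_filter, Finset.mem_univ, true_and] at ht ⊢
        have : (r:ℕ) ≤ (r':ℕ) := h
        omega
      · intro t _ _
        exact_mod_cast hw' t
    have hfiber : ∀ S : Finset (Fin m),
        ∑ s ∈ S, (w s : ℝ) = ∑ t ∈ Finset.univ.filter (fun t => g t ∈ S), (w' t : ℝ) := by
      intro S
      rw [← Finset.sum_fiberwise_eq_sum_filter Finset.univ S g (fun t => (w' t : ℝ))]
      refine Finset.sum_congr rfl fun s _ => ?_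
      exact_mod_cast hgw s
    have hlow : ∀ t : Fin m', C (g t).castSucc ≤ cf t.castSucc := by
      intro t
      simp only [hCdef, hcfdef]
      refine add_le_add_right ?_ _
      rw [hfiber]
      refine Finset.sum_le_sum_of_subset_of_nonneg ?_ (fun t' _ _ => by exact_mod_cast hw' t')
      intro t' ht'
      simp only [Finset.mem_filter, Finset.mem_univ, true_and] at ht' ⊢
      by_contra hcon
      push_neg at hcon
      have : t ≤ t' := by
        rw [Fin.le_def]
        simp only [Fin.coe_castSucc] at hcon
        omega
      have hg := hgmono this
      rw [Fin.le_def] at hg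
      simp only [Fin.coe_castSucc] at ht'
      omega
    have hhigh : ∀ t : Fin m', cf t.succ ≤ C (g t).succ := by
      intro t
      simp only [hCdef, hcfdef]
      refine add_le_add_right ?_ _
      rw [hfiber]
      refine Finset.sum_le_sum_of_subset_of_nonneg ?_ (fun t' _ _ => by exact_mod_cast hw' t')
      intro t' ht'
      simp only [Finset.mem_filter, Finset.mem_univ, true_and, Fin.val_succ] at ht' ⊢
      have : t' ≤ t := by
        rw [Fin.le_def]
        omega
      have hg := hgmono this
      rw [Fin.le_def] at hg
      omega
    have hsR : ∑ s, (w s : ℝ) = (∑ j, (lam j : ℝ)) - ∑ j, (mu j : ℝ) := by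
      exact_mod_cast hsum
    have hsR' : ∑ t, (w' t : ℝ) = (∑ j, (lam j : ℝ)) - ∑ j, (mu j : ℝ) := by
      exact_mod_cast hsum'
    have hClast : C (Fin.last m) = ∑ j, (lam j : ℝ) := by
      simp only [hCdef, Fin.val_last]
      rw [show Finset.univ.filter (fun s : Fin m => (s:ℕ) < m) = Finset.univ from by
        ext s; simp [s.isLt]]
      rw [hsR]; ring
    have hcflast : cf (Fin.last m') = ∑ j, (lam j : ℝ) := by
      simp only [hcfdef, Fin.val_last]
      rw [show Finset.univ.filter (fun t : Fin m' => (t:ℕ) < m') = Finset.univ from by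
        ext t; simp [t.isLt]]
      rw [hsR']; ring
    set X : Fin (m'+1) → Fin n → ℝ := fun r j =>
      if h : (r:ℕ) < m' then
        interp n (xr (g ⟨(r:ℕ), h⟩).castSucc) (xr (g ⟨(r:ℕ), h⟩).succ) (cf r) (j:ℕ)
      else (lam j : ℝ) with hXdef
    have hXc : ∀ (t : Fin m') (j : Fin n),
        X t.castSucc j = interp n (xr (g t).castSucc) (xr (g t).succ) (cf t.castSucc) (j:ℕ) := by
      intro t j
      have h : ((t.castSucc : Fin (m'+1)) : ℕ) < m' := by simpa using t.isLt
      simp only [hXdef]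
      rw [dif_pos h]
      have ht' : (⟨((t.castSucc : Fin (m'+1)) : ℕ), h⟩ : Fin m') = t := by ext; simp
      rw [ht']
    have hXsum : ∀ r : Fin (m'+1), ∑ j, X r j = cf r := by
      intro r
      by_cases h : (r:ℕ) < m'
      · set t : Fin m' := ⟨(r:ℕ), h⟩ with ht
        have hrt : r = t.castSucc := by ext; simp [ht]
        rw [hrt]
        have hb1 : ∑ k ∈ Finset.range n, xr (g t).castSucc k ≤ cf t.castSucc := by
          rw [hrowC]; exact hlow t
        have hb2 : cf t.castSucc ≤ ∑ k ∈ Finset.range n, xr (g t).succ k := by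
          rw [hrowC]
          exact (hcfmono _ _ t.castSucc_le_succ).trans (hhigh t)
        calc ∑ j, X t.castSucc j
            = ∑ j : Fin n,
              interp n (xr (g t).castSucc) (xr (g t).succ) (cf t.castSucc) (j:ℕ) :=
              Finset.sum_congr rfl fun j _ => hXc t j
          _ = ∑ k ∈ Finset.range n,
              interp n (xr (g t).castSucc) (xr (g t).succ) (cf t.castSucc) k :=
              Fin.sum_univ_eq_sum_range _ n
          _ = cf t.castSucc := interp_sum (hab1 (g t)) hb1 hb2
      · have hr : r = Fin.last m' := by
          ext
          simp only [Fin.val_last]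
          omega
        subst hr
        have : ∀ j : Fin n, X (Fin.last m') j = (lam j : ℝ) := by
          intro j
          simp only [hXdef]
          rw [dif_neg (by simp)]
        rw [Finset.sum_congr rfl fun j _ => this j, hcflast]
    have hstep : ∀ (t : Fin m') (j : Fin n),
        X t.castSucc j ≤ X t.succ j ∧ X t.succ j ≤ xr (g t).succ (j:ℕ) := by
      intro t j
      have hab := hab1 (g t)
      by_cases h1 : ((t.succ : Fin (m'+1)) : ℕ) < m'
      · set t1 : Fin m' := ⟨((t.succ : Fin (m'+1)) : ℕ), h1⟩ with ht1
        have hXs : X t.succ j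
            = interp n (xr (g t1).castSucc) (xr (g t1).succ) (cf t.succ) (j:ℕ) := by
          simp only [hXdef]
          rw [dif_pos h1]
        have htle : t ≤ t1 := by
          rw [Fin.le_def]
          simp [ht1]
        by_cases hgs : g t1 = g t
        · rw [hgs] at hXs
          constructor
          · rw [hXc t j, hXs]
            exact interp_mono n _ _ (hcfmono _ _ t.castSucc_le_succ) _
          · rw [hXs]
            exact interp_le hab _ _
        · have hlt : g t < g t1 := lt_of_le_of_ne (hgmono htle) (Ne.symm hgs)
          have htt : t1.castSucc = (t.succ : Fin (m'+1)) := by ext; simp [ht1]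
          have e2 : cf t1.castSucc = cf t.succ := by rw [htt]
          have e4 : C (g t).succ ≤ C (g t1).castSucc := by
            refine hCmono _ _ ?_
            rw [Fin.le_def]
            simp only [Fin.val_succ, Fin.coe_castSucc]
            exact hlt
          have e1 : C (g t1).castSucc ≤ cf t.succ := e2 ▸ hlow t1
          have e3 : cf t.succ ≤ C (g t).succ := hhigh t
          have eqc : cf t.succ = C (g t1).castSucc := le_antisymm (e3.trans e4) e1
          have hroweq : ∀ k, xr (g t).succ k = xr (g t1).castSucc k := by
            refine heqrow _ _ ?_ ?_
            · rw [Fin.le_def]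
              simp only [Fin.val_succ, Fin.coe_castSucc]
              exact hlt
            · rw [← eqc]; exact e3
          have hXval : X t.succ j = xr (g t1).castSucc (j:ℕ) := by
            rw [hXs]
            exact interp_eq_left (hab1 (g t1)) (by rw [hrowC]; exact eqc) (j:ℕ) j.isLt
          constructor
          · rw [hXc t j, hXval, ← hroweq]
            exact interp_le hab _ _
          · rw [hXval, ← hroweq]
      · have hXs : X t.succ j = (lam j : ℝ) := by
          simp only [hXdef]
          rw [dif_neg h1]
        have hlast : (t.succ : Fin (m'+1)) = Fin.last m' := by
          ext
          simp only [Fin.val_last]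
          omega
        have e3 : cf t.succ ≤ C (g t).succ := hhigh t
        have ecl : cf (Fin.last m') = C (Fin.last m) := by rw [hcflast, hClast]
        have e5 : C (Fin.last m) ≤ C (g t).succ := by
          rw [← ecl, ← hlast]; exact e3
        have hroweq : ∀ k, xr (g t).succ k = xr (Fin.last m) k :=
          heqrow _ _ (Fin.le_last _) e5
        have hXval : X t.succ j = xr (g t).succ (j:ℕ) := by
          rw [hXs, hroweq (j:ℕ), hxr_lt _ _ j.isLt]
          exact (hxl j).symm
        constructor
        · rw [hXc t j, hXval]
          exact interp_le hab _ _
        · rw [hXval]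
    refine ⟨X, ⟨fun i j => (hstep i j).1, ?_⟩, ?_, ?_, ?_⟩
    · intro i j hj
      have h2 := (hstep i ⟨(j:ℕ)+1, hj⟩).2
      have h3 := hdiag1 (g i) (j:ℕ) hj
      have h4 : xr (g i).castSucc (j:ℕ) ≤ X i.castSucc j := by
        rw [hXc i j]
        exact interp_ge _ _ _ _ _
      exact h2.trans (h3.trans h4)
    · intro j
      set t : Fin m' := ⟨0, hm'⟩ with ht
      have h00 : (0 : Fin (m'+1)) = t.castSucc := by ext; simp [ht]
      rw [h00, hXc t j]
      have e1 : C (g t).castSucc ≤ cf t.castSucc := hlow t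
      have e2 : cf t.castSucc = C 0 := by
        simp only [hcfdef, hCdef]
        rw [show Finset.univ.filter
            (fun t' : Fin m' => (t':ℕ) < ((t.castSucc : Fin (m'+1)):ℕ)) = ∅ from by
          ext t'; simp [ht]]
        rw [show Finset.univ.filter
            (fun s : Fin m => (s:ℕ) < ((0 : Fin (m+1)):ℕ)) = ∅ from by simp]
        simp
      have e3 : C 0 ≤ C (g t).castSucc := hCmono _ _ (Fin.zero_le _)
      have e4 : cf t.castSucc = C (g t).castSucc := le_antisymm (e2.le.trans e3) e1
      rw [interp_eq_left (hab1 (g t)) (by rw [hrowC]; exact e4) (j:ℕ) j.isLt]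
      have hre := heqrow 0 (g t).castSucc (Fin.zero_le _) ((e4.symm.trans e2).le) (j:ℕ)
      rw [← hre, hxr_lt _ _ j.isLt]
      exact hx0 j
    · intro j
      show X (Fin.last m') j = _
      simp only [hXdef]
      rw [dif_neg (by simp)]
    · intro i
      rw [hXsum i.succ, hXsum i.castSucc, hcfsucc i]
      ring
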